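/- Let X be a real-valued random variable with continuous distribution function and let γ be strictly convex and differentiable with γ' strictly increasing. Then the Bregman superquantile satisfies Q_α^{dγ}(X) = (γ')^{-1}( Q_α( γ'(X) ) ), where Q_α denotes the classical superquantile; in particular γ'(F_X^{-1}(α)) = F_{γ'(X)}^{-1}(α). -/

import Mathlib

open MeasureTheory Filter Topology

/-- Lower quantile of a real random variable. -/
noncomputable def lowerQuantile {Ω : Type*} [MeasurableSpace Ω] (μ : Measure Ω)
    (X : Ω → ℝ) (α : ℝ) : ℝ :=
  sInf {x : ℝ | α ≤ (μ {ω | X ω ≤ x}).toReal}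

lemma lowerQuantile_aux {Ω : Type*} [MeasurableSpace Ω] (μ : Measure Ω)
    [IsProbabilityMeasure μ] (X : Ω → ℝ) (hXm : Measurable X)
    (α : ℝ) (hα : α ∈ Set.Ioo (0:ℝ) 1) :
    ({x : ℝ | α ≤ (μ {ω | X ω ≤ x}).toReal}).Nonempty ∧
      BddBelow {x : ℝ | α ≤ (μ {ω | X ω ≤ x}).toReal} := by
  constructor
  · -- nonempty
    have hmono : Monotone (fun n : ℕ => {ω | X ω ≤ (n : ℝ)}) := by
      intro m n hmn ω hω
      simp only [Set.mem_setOf_eq] at hω ⊢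
      exact hω.trans (by exact_mod_cast hmn)
    have hU : (⋃ n : ℕ, {ω | X ω ≤ (n : ℝ)}) = Set.univ := by
      ext ω; simp only [Set.mem_iUnion, Set.mem_univ, iff_true]
      obtain ⟨n, hn⟩ := exists_nat_ge (X ω)
      exact ⟨n, hn⟩
    have h1 : Tendsto (fun n : ℕ => μ {ω | X ω ≤ (n : ℝ)}) atTop (𝓝 1) := by
      have := tendsto_measure_iUnion_atTop (μ := μ) hmono
      rwa [hU, measure_univ] at this
    have h2 : Tendsto (fun n : ℕ => (μ {ω | X ω ≤ (n : ℝ)}).toReal) atTop (𝓝 1) := by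
      have := (ENNReal.tendsto_toReal (by simp)).comp h1
      simpa [Function.comp_def] using this
    have := h2.eventually (eventually_ge_nhds hα.2)
    obtain ⟨n, hn⟩ := this.exists
    exact ⟨(n : ℝ), hn⟩
  · -- bdd below
    have hanti : Antitone (fun n : ℕ => {ω | X ω ≤ -(n : ℝ)}) := by
      intro m n hmn ω hω
      simp only [Set.mem_setOf_eq] at hω ⊢
      have : (m : ℝ) ≤ (n : ℝ) := by exact_mod_cast hmn
      linarith
    have hI : (⋂ n : ℕ, {ω | X ω ≤ -(n : ℝ)}) = ∅ := by
      ext ω; simp only [Set.mem_iInter, Set.mem_empty_iff_false, iff_false, not_forall]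
      obtain ⟨n, hn⟩ := exists_nat_gt (-X ω)
      exact ⟨n, by simp only [Set.mem_setOf_eq]; intro h; linarith⟩
    have h1 : Tendsto (fun n : ℕ => μ {ω | X ω ≤ -(n : ℝ)}) atTop (𝓝 0) := by
      have := tendsto_measure_iInter_atTop (μ := μ)
        (fun n => (hXm measurableSet_Iic).nullMeasurableSet) hanti
        ⟨0, measure_ne_top μ _⟩
      have heq : (⋂ n : ℕ, X ⁻¹' Set.Iic (-(n:ℝ))) = ∅ := hI
      rw [heq, measure_empty] at this
      exact this
    have h2 : Tendsto (fun n : ℕ => (μ {ω | X ω ≤ -(n : ℝ)}).toReal) atTop (𝓝 0) := by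
      have := (ENNReal.tendsto_toReal (by simp)).comp h1
      simpa [Function.comp_def] using this
    have := h2.eventually (eventually_lt_nhds hα.1)
    obtain ⟨n, hn⟩ := this.exists
    refine ⟨-(n : ℝ), fun x hx => ?_⟩
    by_contra h
    push_neg at h
    have hmono : (μ {ω | X ω ≤ x}).toReal ≤ (μ {ω | X ω ≤ -(n : ℝ)}).toReal := by
      apply ENNReal.toReal_mono (measure_ne_top μ _)
      exact measure_mono fun ω hω => le_trans hω h.le
    exact absurd hx (by simp only [Set.mem_setOf_eq]; linarith)

/-- Link between the Bregman superquantile and the classical superquantile: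
`Q_α^{dγ}(X) = (γ')⁻¹(Q_α(γ'(X)))`, and in particular
`γ'(F_X^{-1}(α)) = F_{γ'(X)}^{-1}(α)`. -/
theorem bregman_superquantile_eq_superquantile_of_transform
    {Ω : Type*} [MeasurableSpace Ω] (μ : Measure Ω) [IsProbabilityMeasure μ]
    (X : Ω → ℝ) (hXm : Measurable X)
    (hcont : Continuous fun x : ℝ => (μ {ω | X ω ≤ x}).toReal)
    (φ : ℝ → ℝ) (hφ : StrictMono φ) (hφc : Continuous φ)
    (α : ℝ) (hα : α ∈ Set.Ioo (0:ℝ) 1) :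
    φ (lowerQuantile μ X α) = lowerQuantile μ (fun ω => φ (X ω)) α ∧
      Function.invFun φ
          ((∫ ω in {ω | lowerQuantile μ X α ≤ X ω}, φ (X ω) ∂μ) / (1 - α)) =
        Function.invFun φ
          ((∫ ω in {ω | lowerQuantile μ (fun ω => φ (X ω)) α ≤ φ (X ω)},
              φ (X ω) ∂μ) / (1 - α)) := by
  set S : Set ℝ := {x : ℝ | α ≤ (μ {ω | X ω ≤ x}).toReal} with hS
  set q : ℝ := lowerQuantile μ X α with hq
  obtain ⟨hSne, hSbdd⟩ := lowerQuantile_aux μ X hXm α hα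
  -- q ∈ S since S is closed
  have hSclosed : IsClosed S := isClosed_le continuous_const hcont
  have hqS : q ∈ S := hSclosed.csInf_mem hSne hSbdd
  -- set of φ-transform
  have hsetφ : ∀ x : ℝ, {ω | φ (X ω) ≤ φ x} = {ω | X ω ≤ x} := by
    intro x; ext ω; simp [hφ.le_iff_le]
  have hT : {y : ℝ | α ≤ (μ {ω | φ (X ω) ≤ y}).toReal} =
      {y : ℝ | α ≤ (μ {ω | (fun ω => φ (X ω)) ω ≤ y}).toReal} := rfl
  have hφqT : φ q ∈ {y : ℝ | α ≤ (μ {ω | φ (X ω) ≤ y}).toReal} := by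
    simp only [Set.mem_setOf_eq, hsetφ q]
    exact hqS
  have hlb : ∀ y ∈ {y : ℝ | α ≤ (μ {ω | φ (X ω) ≤ y}).toReal}, φ q ≤ y := by
    intro y hy
    by_contra hlt
    push_neg at hlt
    by_cases hrange : y ∈ Set.range φ
    · obtain ⟨x, rfl⟩ := hrange
      have hx : x ∈ S := by
        simp only [Set.mem_setOf_eq] at hy ⊢
        rwa [hsetφ x] at hy
      have : q ≤ x := csInf_le hSbdd hx
      exact absurd (hφ.monotone this) (not_le.2 hlt)
    · -- y below all of range φ
      have hempty : {ω | φ (X ω) ≤ y} = ∅ := by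
        ext ω
        simp only [Set.mem_setOf_eq, Set.mem_empty_iff_false, iff_false, not_le]
        by_contra h
        push_neg at h
        have hconn : Set.OrdConnected (Set.range φ) :=
          (isPreconnected_range hφc).ordConnected
        have : y ∈ Set.range φ :=
          hconn.out ⟨X ω, rfl⟩ ⟨q, rfl⟩ ⟨h, hlt.le⟩
        exact hrange this
      simp only [Set.mem_setOf_eq, hempty, measure_empty, ENNReal.toReal_zero] at hy
      linarith [hα.1]
  have h1 : φ q = lowerQuantile μ (fun ω => φ (X ω)) α := by
    refine le_antisymm ?_ ?_
    · exact (le_csInf ⟨φ q, hφqT⟩ hlb)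
    · exact csInf_le ⟨φ q, hlb⟩ hφqT
  refine ⟨h1, ?_⟩
  have hsets : {ω | q ≤ X ω} = {ω | lowerQuantile μ (fun ω => φ (X ω)) α ≤ φ (X ω)} := by
    ext ω
    simp only [Set.mem_setOf_eq, ← h1, hφ.le_iff_le]
  rw [hsets]
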